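/- Exclusion of the large weights: let C be a 12-dimensional F₂-linear subspace of F₂^{1988} such that every nonzero codeword of C has Hamming weight in the set S = {992, 1008, 1024, 1056, 1088, 1152, 1216, 1280, 1344, 1984, 1986, 1988} and such that C has a basis consisting of codewords of Hamming weight exactly 992. Then no codeword of C has Hamming weight 1984, 1986 or 1988; that is, every nonzero codeword of C has Hamming weight in {992, 1008, 1024, 1056, 1088, 1152, 1216, 1280, 1344}. -/

import Mathlib

open Finset Matrix

private lemma zmod2_cases (a : ZMod 2) : a = 0 ∨ a = 1 := by
  revert a; decide

private lemma nat_coord (a b : ZMod 2) :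
    ((if a + b ≠ 0 then 1 else 0) + if b ≠ 0 then 1 else 0 : ℕ)
      = (if a ≠ 0 then 1 else 0) + 2 * (if b ≠ 0 ∧ a = 0 then 1 else 0) := by
  revert a b
  decide

private lemma real_coord (a b : ZMod 2) :
    (if a = 0 then (1:ℝ) else -1) * (if b = 0 then 1 else -1)
      = 1 - 2 * (if a + b ≠ 0 then 1 else 0) := by
  rcases zmod2_cases a with rfl | rfl <;> rcases zmod2_cases b with rfl | rfl <;>
    simp [show (1 : ZMod 2) + 1 = 0 from rfl] <;> norm_num

/-- key weight identity over `ZMod 2`: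
`wt (c+x) + wt x = wt c + 2 * #{i | x i ≠ 0 ∧ c i = 0}` -/
private lemma key_identity (c x : Fin 1988 → ZMod 2) :
    hammingNorm (c + x) + hammingNorm x
      = hammingNorm c + 2 * #{i | x i ≠ 0 ∧ c i = 0} := by
  simp only [hammingNorm, Finset.card_filter, Pi.add_apply, Finset.mul_sum,
    ← Finset.sum_add_distrib]
  exact Finset.sum_congr rfl fun i _ => nat_coord (c i) (x i)

private lemma k_le (c x : Fin 1988 → ZMod 2) :
    #{i | x i ≠ 0 ∧ c i = 0} + hammingNorm c ≤ 1988 := by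
  have h1 : #{i | x i ≠ 0 ∧ c i = 0} ≤ #{i : Fin 1988 | ¬ c i ≠ 0} := by
    apply Finset.card_le_card
    intro i hi
    simp only [Finset.mem_filter, Finset.mem_univ, true_and, not_not] at hi ⊢
    exact hi.2
  have h2 := Finset.card_filter_add_card_filter_not
    (s := (Finset.univ : Finset (Fin 1988))) (p := fun i => c i ≠ 0)
  simp only [hammingNorm, Finset.card_univ, Fintype.card_fin] at h2 ⊢
  omega

/-- the `±1`-vector supported on the support of `c`. -/
private def sgn (c x : Fin 1988 → ZMod 2) : Fin 1988 → ℝ :=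
  fun i => if c i = 0 then 0 else if x i = 0 then 1 else -1

private lemma dot_sgn (c x y : Fin 1988 → ZMod 2)
    (hx : ∀ i, c i = 0 → x i = 0) (hy : ∀ i, c i = 0 → y i = 0) :
    (sgn c x) ⬝ᵥ (sgn c y)
      = (hammingNorm c : ℝ) - 2 * (hammingNorm (x + y) : ℝ) := by
  have hc : (hammingNorm c : ℝ) = ∑ i, (if c i ≠ 0 then (1:ℝ) else 0) := by
    simp only [hammingNorm, Finset.natCast_card_filter]
  have hxy : (hammingNorm (x + y) : ℝ) = ∑ i, (if x i + y i ≠ 0 then (1:ℝ) else 0) := by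
    simp only [hammingNorm, Finset.natCast_card_filter, Pi.add_apply]
  rw [dotProduct, hc, hxy, Finset.mul_sum, ← Finset.sum_sub_distrib]
  apply Finset.sum_congr rfl
  intro i _
  by_cases hci : c i = 0
  · simp [sgn, hci, hx i hci, hy i hci]
  · simp only [sgn, if_neg hci, Pi.add_apply]
    rw [real_coord (x i) (y i), if_pos hci]

private lemma zmod2_add_eq_zero (u v : ZMod 2) (h : u + v = 0) : v = u := by
  revert u v; decide

/-- Exclusion of the large weights: if `C` is a 12-dimensional binary linear code of
length 1988 whose nonzero codewords all have Hamming weight in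
`{992, 1008, 1024, 1056, 1088, 1152, 1216, 1280, 1344, 1984, 1986, 1988}` and which has a
basis of codewords of weight exactly 992, then every nonzero codeword of `C` has Hamming
weight in `{992, 1008, 1024, 1056, 1088, 1152, 1216, 1280, 1344}`. -/
theorem exclude_large_weights
    (C : Submodule (ZMod 2) (Fin 1988 → ZMod 2))
    (hdim : Module.finrank (ZMod 2) C = 12)
    (hwts : ∀ c ∈ C, c ≠ 0 → hammingNorm c ∈
      ({992, 1008, 1024, 1056, 1088, 1152, 1216, 1280, 1344, 1984, 1986, 1988} : Set ℕ))
    (hbasis : ∃ b : Module.Basis (Fin 12) (ZMod 2) C, ∀ i, hammingNorm ((b i : Fin 1988 → ZMod 2)) = 992) :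
    ∀ c ∈ C, c ≠ 0 → hammingNorm c ∈
      ({992, 1008, 1024, 1056, 1088, 1152, 1216, 1280, 1344} : Set ℕ) := by
  obtain ⟨b, hb⟩ := hbasis
  intro c hc hc0
  simp only [Set.mem_insert_iff, Set.mem_singleton_iff]
  have hSset : ∀ x ∈ C, x ≠ 0 → (hammingNorm x = 992 ∨ hammingNorm x = 1008 ∨
      hammingNorm x = 1024 ∨ hammingNorm x = 1056 ∨ hammingNorm x = 1088 ∨
      hammingNorm x = 1152 ∨ hammingNorm x = 1216 ∨ hammingNorm x = 1280 ∨
      hammingNorm x = 1344 ∨ hammingNorm x = 1984 ∨ hammingNorm x = 1986 ∨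
      hammingNorm x = 1988) := by
    intro x h1 h2
    have := hwts x h1 h2
    simpa [Set.mem_insert_iff, Set.mem_singleton_iff] using this
  -- the two easy exclusions
  have heasy : hammingNorm c ≠ 1986 ∧ hammingNorm c ≠ 1988 := by
    constructor <;>
    · intro h
      have hxC : (b 0 : Fin 1988 → ZMod 2) ∈ C := (b 0).2
      have hid := key_identity c (b 0 : Fin 1988 → ZMod 2)
      have hkle := k_le c (b 0 : Fin 1988 → ZMod 2)
      rw [hb 0, h] at hid
      rw [h] at hkle
      have hcx : c + (b 0 : Fin 1988 → ZMod 2) ≠ 0 := by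
        intro e; rw [e, hammingNorm_zero] at hid; omega
      have hmem := hSset _ (C.add_mem hc hxC) hcx
      omega
  have h84 : hammingNorm c ≠ 1984 := by
    intro h
    -- every basis vector is supported inside the support of c
    have hsuppb : ∀ (i : Fin 12) idx, c idx = 0 →
        (b i : Fin 1988 → ZMod 2) idx = 0 := by
      intro i
      have hid := key_identity c (b i : Fin 1988 → ZMod 2)
      have hkle := k_le c (b i : Fin 1988 → ZMod 2)
      rw [hb i, h] at hid
      rw [h] at hkle
      have hcx : c + (b i : Fin 1988 → ZMod 2) ≠ 0 := by
        intro e; rw [e, hammingNorm_zero] at hid; omega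
      have hmem := hSset _ (C.add_mem hc (b i).2) hcx
      have hk0 : #{idx | (b i : Fin 1988 → ZMod 2) idx ≠ 0 ∧ c idx = 0} = 0 := by
        omega
      intro idx hcidx
      by_contra hne
      have hmemf : idx ∈ Finset.filter
          (fun idx => (b i : Fin 1988 → ZMod 2) idx ≠ 0 ∧ c idx = 0) Finset.univ :=
        Finset.mem_filter.mpr ⟨Finset.mem_univ idx, hne, hcidx⟩
      rw [Finset.card_eq_zero] at hk0
      rw [hk0] at hmemf
      exact absurd hmemf (Finset.notMem_empty idx)
    -- pick a coordinate of the representation of c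
    have hcC : (⟨c, hc⟩ : C) ≠ 0 := fun e => hc0 (by simpa using congrArg Subtype.val e)
    have hrc : b.repr ⟨c, hc⟩ ≠ 0 := by
      intro e
      exact hcC (b.repr.injective (by simp [e]))
    obtain ⟨j, hj⟩ := Finsupp.ne_iff.mp hrc
    simp only [Finsupp.coe_zero, Pi.zero_apply] at hj
    set σ : Fin 11 → Fin 12 := j.succAbove with hσ
    have hσinj : Function.Injective σ := Fin.succAbove_right_injective
    set gg : (Fin 11 → ZMod 2) → C := fun a => ∑ i, a i • b (σ i) with hgg
    have hrepr : ∀ a t, b.repr (gg a) t = ∑ i, a i * (if σ i = t then 1 else 0) := by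
      intro a t
      rw [hgg]
      simp only [map_sum, _root_.map_smul, Module.Basis.repr_self, Finsupp.finset_sum_apply,
        Finsupp.smul_apply, Finsupp.single_apply, smul_eq_mul]
    have hreprj : ∀ a, b.repr (gg a) j = 0 := by
      intro a; rw [hrepr]
      exact Finset.sum_eq_zero fun i _ => by
        rw [if_neg (Fin.succAbove_ne j i), mul_zero]
    have hreprσ : ∀ a i₀, b.repr (gg a) (σ i₀) = a i₀ := by
      intro a i₀; rw [hrepr, Finset.sum_eq_single i₀]
      · rw [if_pos rfl, mul_one]
      · intro i _ hne; rw [if_neg fun e => hne (hσinj e), mul_zero]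
      · intro habs; exact absurd (Finset.mem_univ i₀) habs
    have hg0 : ∀ a : Fin 11 → ZMod 2, a ≠ 0 → gg a ≠ 0 := by
      intro a ha e
      obtain ⟨i₀, hi₀⟩ := Function.ne_iff.mp ha
      apply hi₀
      have h2 := hreprσ a i₀
      rw [e] at h2
      simpa using h2.symm
    have hgc : ∀ a, gg a ≠ (⟨c, hc⟩ : C) := by
      intro a e
      exact hj (by rw [← e, hreprj])
    have hgadd : ∀ a a', gg a + gg a' = gg (a + a') := by
      intro a a'; rw [hgg]
      simp only [← Finset.sum_add_distrib, Pi.add_apply, add_smul]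
    set g : (Fin 11 → ZMod 2) → (Fin 1988 → ZMod 2) :=
      fun a => ((gg a : C) : Fin 1988 → ZMod 2) with hgdef
    have hgC : ∀ a, g a ∈ C := fun a => (gg a).2
    have hgsupp : ∀ a idx, c idx = 0 → g a idx = 0 := by
      intro a idx hcidx
      rw [hgdef]
      simp only [hgg, Submodule.coe_sum, Submodule.coe_smul, Finset.sum_apply,
        Pi.smul_apply]
      exact Finset.sum_eq_zero fun i _ => by
        rw [hsuppb (σ i) idx hcidx, smul_zero]
    have hk0g : ∀ a, #{idx | g a idx ≠ 0 ∧ c idx = 0} = 0 := by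
      intro a
      rw [Finset.card_eq_zero, Finset.filter_eq_empty_iff]
      rintro idx _ ⟨h1, h2⟩
      exact h1 (hgsupp a idx h2)
    have hgsum : ∀ a a', g a + g a' = g (a + a') := by
      intro a a'
      rw [hgdef]
      simp only
      rw [← Submodule.coe_add, hgadd]
    have hgwt : ∀ a : Fin 11 → ZMod 2, a ≠ 0 → hammingNorm (g a) = 992 := by
      intro a ha
      have hid := key_identity c (g a)
      rw [h, hk0g a] at hid
      have hx0 : g a ≠ 0 := fun e => hg0 a ha (Subtype.ext e)
      have hcx : c + g a ≠ 0 := by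
        intro e
        have hgac : g a = c := by
          funext idx
          have h2 := congrFun e idx
          simp only [Pi.add_apply, Pi.zero_apply] at h2
          exact zmod2_add_eq_zero _ _ h2
        exact hgc a (Subtype.ext hgac)
      have h1 := hSset (g a) (hgC a) hx0
      have h2 := hSset (c + g a) (C.add_mem hc (hgC a)) hcx
      omega
    set F : (Fin 11 → ZMod 2) → (Fin 1988 → ℝ) := fun a => sgn c (g a) with hF
    have hdot : ∀ a a', F a ⬝ᵥ F a' = if a = a' then (1984 : ℝ) else 0 := by
      intro a a'
      have hd := dot_sgn c (g a) (g a') (hgsupp a) (hgsupp a')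
      rw [hgsum a a'] at hd
      by_cases he : a = a'
      · subst he
        have haa : a + a = 0 := by
          funext i
          exact (show ∀ u : ZMod 2, u + u = 0 by decide) (a i)
        have hgz : g (a + a) = 0 := by
          rw [haa, hgdef]
          have : gg 0 = 0 := by rw [hgg]; simp
          simp only [this, ZeroMemClass.coe_zero]
        rw [hgz, hammingNorm_zero, h] at hd
        rw [if_pos rfl, hd]
        norm_num
      · have hne0 : a + a' ≠ 0 := by
          intro e
          apply he
          funext i
          have h2 := congrFun e i
          simp only [Pi.add_apply, Pi.zero_apply] at h2
          exact (zmod2_add_eq_zero _ _ h2).symm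
        rw [hgwt _ hne0, h] at hd
        rw [if_neg he, hd]
        norm_num
    have hli : LinearIndependent ℝ F := by
      rw [Fintype.linearIndependent_iff]
      intro t ht a₀
      have hzero := congrArg (fun v => v ⬝ᵥ F a₀) ht
      simp only [zero_dotProduct] at hzero
      have hexp : (∑ a, t a • F a) ⬝ᵥ F a₀ = ∑ a, t a * (F a ⬝ᵥ F a₀) := by
        simp only [dotProduct, Finset.sum_apply, Pi.smul_apply, smul_eq_mul,
          Finset.sum_mul, Finset.mul_sum, mul_assoc]
        rw [Finset.sum_comm]
      rw [hexp] at hzero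
      simp only [hdot, mul_ite, mul_zero] at hzero
      rw [Finset.sum_ite_eq' Finset.univ a₀] at hzero
      simp only [Finset.mem_univ, if_true] at hzero
      have := mul_eq_zero.mp hzero
      rcases this with h'|h'
      · exact h'
      · norm_num at h'
    have hcard := hli.fintype_card_le_finrank
    rw [Module.finrank_fintype_fun_eq_card] at hcard
    simp only [Fintype.card_fun, Fintype.card_fin, ZMod.card] at hcard
    norm_num at hcard
  have hS := hSset c hc hc0
  obtain ⟨h86, h88⟩ := heasy
  omega
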